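/- arXiv:2603.00742 — 4 statements merged into one kernel-verified Lean document; each statement's English description precedes it below -/
import Mathlib

section
/- Suppose Σ = Σ_{k=1}^D s_k q_k r_kᵀ where {q_k} and {r_k} are orthonormal families and s_k > 0. If U, V satisfy VU = Σ_{k=1}^r s_k q_k r_kᵀ for some r ≤ D, the row space of U is contained in span{r_1,…,r_r}, and the column space of V is contained in span{q_1,…,q_r}, then (U, V) is a critical point of L(U,V) = (1/2)‖VU − Σ‖_F², i.e., Vᵀ(VU − Σ) = 0 and (VU − Σ)Uᵀ = 0. -/
open Matrix

lemma dot_zero_span {n : ℕ} (u : Fin n → ℝ) (S : Set (Fin n → ℝ))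
    (h : ∀ w ∈ S, w ⬝ᵥ u = 0) {v : Fin n → ℝ} (hv : v ∈ Submodule.span ℝ S) :
    v ⬝ᵥ u = 0 := by
  induction hv using Submodule.span_induction with
  | mem w hw => exact h w hw
  | zero => simp
  | add x y _ _ hx hy => simp [add_dotProduct, hx, hy]
  | smul c x _ hx => simp [smul_dotProduct, hx]

/-- If `Σ = Σ_{k} s_k q_k r_kᵀ` (orthonormal `q_k`, `r_k`, `s_k > 0`),
`VU = Σ_{k<r} s_k q_k r_kᵀ`, the rows of `U` lie in `span{r_k : k < r}` and the
columns of `V` lie in `span{q_k : k < r}`, then `(U,V)` is a critical point of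
`L(U,V) = (1/2)‖VU − Σ‖_F²`, i.e. both gradients vanish. -/
theorem critical_point_of_partial_svd (H di dout D rr : ℕ) (hrr : rr ≤ D)
    (s : Fin D → ℝ) (hs : ∀ k, 0 < s k)
    (q : Fin D → Fin dout → ℝ) (r : Fin D → Fin di → ℝ)
    (hq : ∀ k l, q k ⬝ᵥ q l = if k = l then (1 : ℝ) else 0)
    (hr : ∀ k l, r k ⬝ᵥ r l = if k = l then (1 : ℝ) else 0)
    (U : Matrix (Fin H) (Fin di) ℝ) (V : Matrix (Fin dout) (Fin H) ℝ)
    (Sig : Matrix (Fin dout) (Fin di) ℝ)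
    (hSig : Sig = ∑ k : Fin D, s k • vecMulVec (q k) (r k))
    (hVU : V * U = ∑ k : Fin D, if (k : ℕ) < rr then s k • vecMulVec (q k) (r k) else 0)
    (hrow : ∀ i : Fin H,
      U i ∈ Submodule.span ℝ {v : Fin di → ℝ | ∃ k : Fin D, (k : ℕ) < rr ∧ v = r k})
    (hcol : ∀ j : Fin H,
      (fun i => V i j) ∈ Submodule.span ℝ {v : Fin dout → ℝ | ∃ k : Fin D, (k : ℕ) < rr ∧ v = q k}) :
    Vᵀ * (V * U - Sig) = 0 ∧ (V * U - Sig) * Uᵀ = 0 := by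
  have hqV : ∀ (a : Fin H) (k : Fin D), rr ≤ (k : ℕ) → (fun i => V i a) ⬝ᵥ q k = 0 := by
    intro a k hk
    refine dot_zero_span (q k) _ ?_ (hcol a)
    rintro w ⟨l, hl, rfl⟩
    rw [hq, if_neg]
    rintro rfl; omega
  have hrU : ∀ (i : Fin H) (k : Fin D), rr ≤ (k : ℕ) → U i ⬝ᵥ r k = 0 := by
    intro i k hk
    refine dot_zero_span (r k) _ ?_ (hrow i)
    rintro w ⟨l, hl, rfl⟩
    rw [hr, if_neg]
    rintro rfl; omega
  have hE : V * U - Sig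
      = ∑ k : Fin D, if (k : ℕ) < rr then 0 else (-(s k)) • vecMulVec (q k) (r k) := by
    rw [hVU, hSig, ← Finset.sum_sub_distrib]
    refine Finset.sum_congr rfl fun k _ => ?_
    split <;> simp [neg_smul]
  constructor
  · ext a b
    simp only [Matrix.mul_apply, Matrix.zero_apply, hE, Matrix.sum_apply,
      Matrix.transpose_apply]
    simp only [Finset.mul_sum]
    rw [Finset.sum_comm]
    refine Finset.sum_eq_zero fun k _ => ?_
    by_cases hk : (k : ℕ) < rr
    · simp [hk]
    · push_neg at hk
      simp only [if_neg (by omega : ¬ (k : ℕ) < rr), Matrix.smul_apply, vecMulVec_apply,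
        smul_eq_mul]
      calc ∑ i, V i a * (-(s k) * (q k i * r k b))
          = ∑ i, (-(s k) * r k b) * (V i a * q k i) := by
            refine Finset.sum_congr rfl fun i _ => ?_; ring
        _ = (-(s k) * r k b) * ((fun i => V i a) ⬝ᵥ q k) := by
            rw [dotProduct, Finset.mul_sum]
        _ = 0 := by rw [hqV a k hk]; ring
  · ext a b
    simp only [Matrix.mul_apply, Matrix.zero_apply, hE, Matrix.sum_apply,
      Matrix.transpose_apply]
    simp only [Finset.sum_mul]
    rw [Finset.sum_comm]
    refine Finset.sum_eq_zero fun k _ => ?_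
    by_cases hk : (k : ℕ) < rr
    · simp [hk]
    · push_neg at hk
      simp only [if_neg (by omega : ¬ (k : ℕ) < rr), Matrix.smul_apply, vecMulVec_apply,
        smul_eq_mul]
      calc ∑ i, -(s k) * (q k a * r k i) * U b i
          = ∑ i, (-(s k) * q k a) * (U b i * r k i) := by
            refine Finset.sum_congr rfl fun i _ => ?_; ring
        _ = (-(s k) * q k a) * (U b ⬝ᵥ r k) := by
            rw [dotProduct, Finset.mul_sum]
        _ = 0 := by rw [hrU b k hk]; ring
end

section
/- Let σ(t) = s / (1 + (s/σ₀ − 1)e^{−2st}) with 0 < σ₀ < s. For any ε ∈ (0, s − σ₀), the time t_ε at which σ(t_ε) = s − ε equals (1/(2s))·ln((s/σ₀ − 1)·(s − ε)/ε). In particular, for fixed σ₀ and ε-level proportional to s, the learning time scales as 1/s up to logarithmic factors. -/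
open Real

/-- For the logistic solution `σ(t) = s/(1 + (s/σ₀ − 1)e^{−2st})` with `0 < σ₀ < s`
and any `ε ∈ (0, s − σ₀)`, the unique time `t ≥ 0` at which `σ(t) = s − ε` is
`t_ε = (1/(2s))·ln((s/σ₀ − 1)(s − ε)/ε)`. -/
theorem logistic_hitting_time (s σ₀ ε : ℝ) (hs : 0 < s) (h0 : σ₀ ∈ Set.Ioo 0 s)
    (hε : ε ∈ Set.Ioo 0 (s - σ₀)) (σ : ℝ → ℝ)
    (hσ : ∀ t, σ t = s / (1 + (s / σ₀ - 1) * Real.exp (-2 * s * t))) :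
    0 ≤ (1 / (2 * s)) * Real.log ((s / σ₀ - 1) * (s - ε) / ε) ∧
    σ ((1 / (2 * s)) * Real.log ((s / σ₀ - 1) * (s - ε) / ε)) = s - ε ∧
    ∀ t : ℝ, σ t = s - ε → t = (1 / (2 * s)) * Real.log ((s / σ₀ - 1) * (s - ε) / ε) := by
  obtain ⟨h01, h02⟩ := h0
  obtain ⟨hε1, hε2⟩ := hε
  have hsε : 0 < s - ε := by nlinarith
  have hA : 0 < s / σ₀ - 1 := by
    have : 1 < s / σ₀ := (one_lt_div h01).2 h02
    linarith
  have hc : 0 < (s / σ₀ - 1) * (s - ε) / ε := by positivity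
  set A := s / σ₀ - 1 with hAdef
  set c := A * (s - ε) / ε with hcdef
  have hc1 : 1 ≤ c := by
    rw [hcdef, hAdef, le_div_iff₀ hε1, div_sub' (ne_of_gt h01)]
    rw [div_mul_eq_mul_div, le_div_iff₀ h01]
    nlinarith
  have key : ∀ t : ℝ, σ t = s - ε ↔ Real.exp (-2 * s * t) = 1 / c := by
    intro t
    have hE : 0 < Real.exp (-2 * s * t) := Real.exp_pos _
    have hden : 0 < 1 + A * Real.exp (-2 * s * t) := by positivity
    rw [hσ t]
    rw [div_eq_iff (ne_of_gt hden)]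
    constructor
    · intro h
      rw [hcdef]
      field_simp
      rw [show -(2 * s * t) = -2 * s * t by ring]
      nlinarith
    · intro h
      rw [hcdef] at h
      field_simp at h
      rw [show -(2 * s * t) = -2 * s * t by ring] at h
      nlinarith [mul_pos hA hE]
  have hT : Real.exp (-2 * s * ((1 / (2 * s)) * Real.log c)) = 1 / c := by
    have : -2 * s * ((1 / (2 * s)) * Real.log c) = -Real.log c := by
      field_simp
    rw [this, Real.exp_neg, Real.exp_log hc, one_div]
  refine ⟨?_, (key _).2 hT, ?_⟩
  · have hlog : 0 ≤ Real.log c := Real.log_nonneg hc1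
    positivity
  · intro t ht
    have h := (key t).1 ht
    have := congrArg Real.log h
    rw [Real.log_exp, Real.log_div one_ne_zero (ne_of_gt hc), Real.log_one] at this
    have h2s : (2 : ℝ) * s ≠ 0 := by positivity
    field_simp at this ⊢
    linarith
end

section
/- Under gradient flow U'(t) = −Vᵀ(VU − Σ), V'(t) = −(VU − Σ)Uᵀ, the balance quantity B(t) = V(t)ᵀV(t) − U(t)U(t)ᵀ is conserved: d/dt B(t) = 0 for all t. In particular, if VᵀV = UUᵀ at initialization, this holds throughout training. -/
open Matrix

/-- Under the gradient flow `U' = −Vᵀ(VU − Σ)`, `V' = −(VU − Σ)Uᵀ` (stated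
entrywise), the balance quantity `B(t) = V(t)ᵀV(t) − U(t)U(t)ᵀ` has zero time
derivative in every entry; in particular if `VᵀV = UUᵀ` at `t = 0` then it holds
for all `t`. -/
theorem balance_conserved_under_gradient_flow (H di dout : ℕ)
    (Sig : Matrix (Fin dout) (Fin di) ℝ)
    (U : ℝ → Matrix (Fin H) (Fin di) ℝ) (V : ℝ → Matrix (Fin dout) (Fin H) ℝ)
    (hU : ∀ t (i : Fin H) (j : Fin di),
      HasDerivAt (fun t => U t i j) ((-((V t)ᵀ * (V t * U t - Sig))) i j) t)
    (hV : ∀ t (i : Fin dout) (j : Fin H),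
      HasDerivAt (fun t => V t i j) ((-((V t * U t - Sig) * (U t)ᵀ)) i j) t) :
    (∀ t (i j : Fin H),
      HasDerivAt (fun t => ((V t)ᵀ * V t - U t * (U t)ᵀ) i j) 0 t) ∧
    ((V 0)ᵀ * V 0 = U 0 * (U 0)ᵀ → ∀ t, (V t)ᵀ * V t = U t * (U t)ᵀ) := by
  have key : ∀ t (i j : Fin H),
      HasDerivAt (fun t => ((V t)ᵀ * V t - U t * (U t)ᵀ) i j) 0 t := by
    intro t i j
    set M := V t * U t - Sig with hM
    have h1 : HasDerivAt (fun t => ∑ k, V t k i * V t k j - ∑ k, U t i k * U t j k)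
        ((∑ k, ((-(M * (U t)ᵀ)) k i * V t k j + V t k i * (-(M * (U t)ᵀ)) k j)) -
         (∑ k, ((-((V t)ᵀ * M)) i k * U t j k + U t i k * (-((V t)ᵀ * M)) j k))) t := by
      apply HasDerivAt.sub
      · exact HasDerivAt.fun_sum fun k _ => (hV t k i).mul (hV t k j)
      · exact HasDerivAt.fun_sum fun k _ => (hU t i k).mul (hU t j k)
    have hfun : (fun t => ((V t)ᵀ * V t - U t * (U t)ᵀ) i j)
        = fun t => ∑ k, V t k i * V t k j - ∑ k, U t i k * U t j k := by
      funext s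
      simp [Matrix.mul_apply, Matrix.sub_apply, Matrix.transpose_apply]
    have hzero : ((∑ k, ((-(M * (U t)ᵀ)) k i * V t k j + V t k i * (-(M * (U t)ᵀ)) k j)) -
         (∑ k, ((-((V t)ᵀ * M)) i k * U t j k + U t i k * (-((V t)ᵀ * M)) j k))) = 0 := by
      have e1 : (∑ k, ((-(M * (U t)ᵀ)) k i * V t k j + V t k i * (-(M * (U t)ᵀ)) k j))
          = (((-(M * (U t)ᵀ))ᵀ * V t) i j + ((V t)ᵀ * (-(M * (U t)ᵀ))) i j) := by
        rw [Finset.sum_add_distrib]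
        simp [Matrix.mul_apply, Matrix.transpose_apply, mul_comm]
      have e2 : (∑ k, ((-((V t)ᵀ * M)) i k * U t j k + U t i k * (-((V t)ᵀ * M)) j k))
          = (((-((V t)ᵀ * M)) * (U t)ᵀ) i j + (U t * (-((V t)ᵀ * M))ᵀ) i j) := by
        rw [Finset.sum_add_distrib]
        simp [Matrix.mul_apply, Matrix.transpose_apply, mul_comm]
      rw [e1, e2]
      have : ((-(M * (U t)ᵀ))ᵀ * V t + (V t)ᵀ * (-(M * (U t)ᵀ)))
          - ((-((V t)ᵀ * M)) * (U t)ᵀ + U t * (-((V t)ᵀ * M))ᵀ) = 0 := by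
        simp [Matrix.transpose_mul, Matrix.mul_assoc]
        abel
      have := congrFun (congrFun this i) j
      simpa [Matrix.sub_apply, Matrix.add_apply] using this
    rw [hfun]
    rw [hzero] at h1
    exact h1
  refine ⟨key, ?_⟩
  intro h0 t
  have hconst : ∀ (i j : Fin H),
      ((V t)ᵀ * V t - U t * (U t)ᵀ) i j = ((V 0)ᵀ * V 0 - U 0 * (U 0)ᵀ) i j := by
    intro i j
    exact is_const_of_deriv_eq_zero
      (fun s => (key s i j).differentiableAt)
      (fun s => (key s i j).deriv) t 0
  have : (V t)ᵀ * V t - U t * (U t)ᵀ = 0 := by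
    ext i j
    rw [hconst i j]
    simp [h0]
  exact sub_eq_zero.mp this
end

section
/- If U, V evolve under the gradient flow U' = −Vᵀ(VU − Σ), V' = −(VU − Σ)Uᵀ and satisfy the balanced condition V(t)ᵀV(t) = U(t)U(t)ᵀ for all t, then the product W = VU evolves as W' = −(W − Σ)(WᵀW)^{1/2} − (WWᵀ)^{1/2}(W − Σ), where M^{1/2} denotes the positive semidefinite square root. -/
open Matrix

noncomputable def Matrix.PosSemidef.sqrt {n 𝕜 : Type*} [Fintype n] [DecidableEq n] [RCLike 𝕜]
    [PartialOrder 𝕜]    {A : Matrix n n 𝕜} (hA : A.PosSemidef) : Matrix n n 𝕜 :=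
  hA.1.eigenvectorUnitary.1 * diagonal ((↑) ∘ (√·) ∘ hA.1.eigenvalues) *
    (star hA.1.eigenvectorUnitary : Matrix n n 𝕜)

open scoped MatrixOrder in
theorem posSemidef_eq_sqrt_of_sq_eq_port {n : Type*} [Fintype n] [DecidableEq n]
    {A B : Matrix n n ℝ} (hB : B.PosSemidef) (hA : A.PosSemidef) (h : B ^ 2 = A) :
    B = hA.sqrt := by
  have h1 : hA.sqrt = cfc Real.sqrt A := by
    rw [hA.1.cfc_eq, Matrix.IsHermitian.cfc, Matrix.PosSemidef.sqrt]
    simp [Unitary.conjStarAlgAut_apply]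
  rw [h1, ← cfcₙ_eq_cfc (hf0 := Real.sqrt_zero), ← CFC.sqrt_eq_real_sqrt A hA.nonneg]
  exact (CFC.sqrt_unique (by rw [← pow_two]; exact h) hB.nonneg).symm

/-- Under the balanced gradient flow `U' = −Vᵀ(VU − Σ)`, `V' = −(VU − Σ)Uᵀ` with
`V(t)ᵀV(t) = U(t)U(t)ᵀ` for all `t`, the product `W = VU` evolves (entrywise) as
`W' = −(W − Σ)(WᵀW)^{1/2} − (WWᵀ)^{1/2}(W − Σ)`, with the positive semidefinite
square root. -/
theorem product_dynamics_under_balanced_flow (H di dout : ℕ)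
    (Sig : Matrix (Fin dout) (Fin di) ℝ)
    (U : ℝ → Matrix (Fin H) (Fin di) ℝ) (V : ℝ → Matrix (Fin dout) (Fin H) ℝ)
    (hU : ∀ t (i : Fin H) (j : Fin di),
      HasDerivAt (fun t => U t i j) ((-((V t)ᵀ * (V t * U t - Sig))) i j) t)
    (hV : ∀ t (i : Fin dout) (j : Fin H),
      HasDerivAt (fun t => V t i j) ((-((V t * U t - Sig) * (U t)ᵀ)) i j) t)
    (hbal : ∀ t, (V t)ᵀ * V t = U t * (U t)ᵀ)
    (hps1 : ∀ t, ((V t * U t)ᵀ * (V t * U t)).PosSemidef)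
    (hps2 : ∀ t, ((V t * U t) * (V t * U t)ᵀ).PosSemidef) :
    ∀ t (i : Fin dout) (j : Fin di),
      HasDerivAt (fun t => (V t * U t) i j)
        ((-(V t * U t - Sig) * (hps1 t).sqrt - (hps2 t).sqrt * (V t * U t - Sig)) i j) t := by
  intro t i j
  have hpsU : ((U t)ᵀ * U t).PosSemidef := by
    have := Matrix.posSemidef_conjTranspose_mul_self (U t)
    simpa using this
  have hpsV : (V t * (V t)ᵀ).PosSemidef := by
    have := Matrix.posSemidef_self_mul_conjTranspose (V t)
    simpa using this
  have hsq1 : (hps1 t).sqrt = (U t)ᵀ * U t := by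
    refine (posSemidef_eq_sqrt_of_sq_eq_port hpsU (hps1 t) ?_).symm
    rw [pow_two]
    calc (U t)ᵀ * U t * ((U t)ᵀ * U t) = (U t)ᵀ * (U t * (U t)ᵀ) * U t := by
          simp [Matrix.mul_assoc]
      _ = (V t * U t)ᵀ * (V t * U t) := by
          rw [← hbal t, Matrix.transpose_mul]; simp [Matrix.mul_assoc]
  have hsq2 : (hps2 t).sqrt = V t * (V t)ᵀ := by
    refine (posSemidef_eq_sqrt_of_sq_eq_port hpsV (hps2 t) ?_).symm
    rw [pow_two]
    calc V t * (V t)ᵀ * (V t * (V t)ᵀ) = V t * ((V t)ᵀ * V t) * (V t)ᵀ := by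
          simp [Matrix.mul_assoc]
      _ = (V t * U t) * (V t * U t)ᵀ := by
          rw [hbal t, Matrix.transpose_mul]; simp [Matrix.mul_assoc]
  have key : HasDerivAt (fun t => (V t * U t) i j)
      (((-((V t * U t - Sig) * (U t)ᵀ)) * U t + V t * (-((V t)ᵀ * (V t * U t - Sig)))) i j) t := by
    have : ∀ s, (V s * U s) i j = ∑ k, V s i k * U s k j := by
      intro s; rfl
    simp only [this, Matrix.add_apply, Matrix.mul_apply, ← Finset.sum_add_distrib]
    exact HasDerivAt.fun_sum fun k _ => ((hV t i k).mul (hU t k j))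
  have meq : -(V t * U t - Sig) * (hps1 t).sqrt - (hps2 t).sqrt * (V t * U t - Sig)
      = (-((V t * U t - Sig) * (U t)ᵀ)) * U t + V t * (-((V t)ᵀ * (V t * U t - Sig))) := by
    rw [hsq1, hsq2]
    simp only [Matrix.neg_mul, Matrix.mul_neg, Matrix.mul_assoc]
    abel
  rw [meq]
  exact key
end
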